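/- Let d ≥ 1, θ ∈ 𝒮(ℝ^d;ℂ) and t > 0. For u ∈ L²(ℝ^d), let γ(t,v) = ∫_{ℝ^d} u(x) conj(Ψ_v(t,x)) dx. Then v ↦ γ(t,v) belongs to L²(ℝ^d) and ‖γ(t,·)‖_{L²_v(ℝ^d)} ≤ 2^{−d/2} ‖θ‖_{L¹(ℝ^d)} ‖u‖_{L²(ℝ^d)}. -/

import Mathlib

open MeasureTheory
open scoped ENNReal NNReal

section Helper
variable {E : Type*} [NormedAddCommGroup E] [NormedSpace ℝ E] [MeasurableSpace E]
  [BorelSpace E] [FiniteDimensional ℝ E]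

lemma lintegral_comp_smul_add (μ : Measure E) [Measure.IsAddHaarMeasure μ] (g : E → ℝ≥0∞)
    (hg : Measurable g) {c : ℝ} (hc : c ≠ 0) (b : E) :
    ∫⁻ x, g (c • x + b) ∂μ
      = ENNReal.ofReal |(c ^ Module.finrank ℝ E)⁻¹| * ∫⁻ y, g y ∂μ := by
  have h1 : μ.map (fun x : E => c • x + b)
      = (μ.map (fun x : E => c • x)).map (fun y : E => y + b) := by
    rw [Measure.map_map (measurable_add_const b) (measurable_const_smul c)]
    rfl
  have h2 : μ.map (fun x : E => c • x + b)
      = ENNReal.ofReal |(c ^ Module.finrank ℝ E)⁻¹| • μ := by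
    rw [h1, Measure.map_addHaar_smul μ hc, Measure.map_smul,
      map_add_right_eq_self]
  calc ∫⁻ x, g (c • x + b) ∂μ
      = ∫⁻ y, g y ∂(μ.map (fun x : E => c • x + b)) := by
        rw [lintegral_map hg ((measurable_const_smul c).add_const b)]
    _ = ENNReal.ofReal |(c ^ Module.finrank ℝ E)⁻¹| * ∫⁻ y, g y ∂μ := by
        rw [h2, lintegral_smul_measure, smul_eq_mul]
end Helper


/-- For `u ∈ L²(ℝ^d)` and
`γ(t,v) = ∫ u(x) conj(Ψ_v(t,x)) dx` with the wave packet
`Ψ_v(t,x) = θ((x - 2tv)/√t) e^{i|x|²/(4t)}`, the function `v ↦ γ(t,v)` belongs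
to `L²(ℝ^d)` with `‖γ(t,·)‖_{L²_v} ≤ 2^{-d/2} ‖θ‖_{L¹} ‖u‖_{L²}`. -/
theorem statement9 (d : ℕ) (hd : 1 ≤ d)
    (θ : SchwartzMap (EuclideanSpace ℝ (Fin d)) ℂ)
    (t : ℝ) (ht : 0 < t)
    (u : EuclideanSpace ℝ (Fin d) → ℂ)
    (hu : MemLp u 2 (volume : Measure (EuclideanSpace ℝ (Fin d))))
    (γ : EuclideanSpace ℝ (Fin d) → ℂ)
    (hγ : ∀ v, γ v = ∫ x, u x *
      (starRingEnd ℂ) (θ ((Real.sqrt t)⁻¹ • (x - (2 * t) • v)) *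
        Complex.exp (Complex.I * ((‖x‖ : ℂ) ^ 2 / (4 * (t : ℂ)))))) :
    MemLp γ 2 (volume : Measure (EuclideanSpace ℝ (Fin d))) ∧
    eLpNorm γ 2 volume ≤
      ENNReal.ofReal ((2 : ℝ) ^ (-(d : ℝ) / 2) * ∫ x, ‖θ x‖) *
        eLpNorm u 2 volume := by
  set s : ℝ := Real.sqrt t with hs_def
  have hs : 0 < s := Real.sqrt_pos.2 ht
  have hs2 : s * s = t := Real.mul_self_sqrt ht.le
  have hfr : Module.finrank ℝ (EuclideanSpace ℝ (Fin d)) = d := finrank_euclideanSpace_fin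
  -- basic objects
  set g : EuclideanSpace ℝ (Fin d) → ℝ≥0∞ := fun y => (‖θ y‖₊ : ℝ≥0∞) with hg_def
  have hg : Measurable g := θ.continuous.measurable.nnnorm.coe_nnreal_ennreal
  set L : ℝ≥0∞ := ∫⁻ y, g y with hL_def
  have hθi : Integrable (fun y : EuclideanSpace ℝ (Fin d) => θ y) volume := θ.integrable
  have hL_top : L ≠ ⊤ := hθi.2.ne
  have hLofReal : ENNReal.ofReal (∫ x, ‖θ x‖) = L :=
    ofReal_integral_norm_eq_lintegral_enorm hθi
  set U : EuclideanSpace ℝ (Fin d) → ℝ≥0∞ := fun x => (‖u x‖₊ : ℝ≥0∞) with hU_def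
  have hU : AEMeasurable U volume := hu.1.enorm
  set Φ : EuclideanSpace ℝ (Fin d) × EuclideanSpace ℝ (Fin d) → EuclideanSpace ℝ (Fin d) :=
    fun p => (Real.sqrt t)⁻¹ • (p.2 - (2 * t) • p.1) with hΦ_def
  have hΦc : Continuous Φ := by rw [hΦ_def]; fun_prop
  have hKm : Measurable (fun p : EuclideanSpace ℝ (Fin d) × EuclideanSpace ℝ (Fin d) => g (Φ p)) :=
    hg.comp hΦc.measurable
  -- affine rewriting
  have hrw1 : ∀ v x : EuclideanSpace ℝ (Fin d), (Real.sqrt t)⁻¹ • (x - (2 * t) • v)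
      = s⁻¹ • x + (-(s⁻¹ * (2 * t))) • v := by
    intro v x
    rw [← hs_def, smul_sub, smul_smul, sub_eq_add_neg, ← neg_smul]
  have hrw2 : ∀ v x : EuclideanSpace ℝ (Fin d), (Real.sqrt t)⁻¹ • (x - (2 * t) • v)
      = (-(s⁻¹ * (2 * t))) • v + s⁻¹ • x := by
    intro v x; rw [hrw1 v x, add_comm]
  have hs_ne : s⁻¹ ≠ 0 := inv_ne_zero hs.ne'
  have hc_pos : 0 < s⁻¹ * (2 * t) := by positivity
  have hc2_ne : -(s⁻¹ * (2 * t)) ≠ 0 := by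
    simp only [neg_ne_zero]; exact hc_pos.ne'
  -- the two constants
  set a1 : ℝ := |((s⁻¹) ^ d)⁻¹| with ha1_def
  set a2 : ℝ := |((-(s⁻¹ * (2 * t))) ^ d)⁻¹| with ha2_def
  have hA : ∀ v : EuclideanSpace ℝ (Fin d), ∫⁻ x, g (Φ (v, x)) = ENNReal.ofReal a1 * L := by
    intro v
    have h : ∀ x : EuclideanSpace ℝ (Fin d),
        Φ (v, x) = s⁻¹ • x + (-(s⁻¹ * (2 * t))) • v := fun x => hrw1 v x
    simp_rw [h]
    rw [lintegral_comp_smul_add volume g hg hs_ne, hfr]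
  have hB : ∀ x : EuclideanSpace ℝ (Fin d), ∫⁻ v, g (Φ (v, x)) = ENNReal.ofReal a2 * L := by
    intro x
    have h : ∀ v : EuclideanSpace ℝ (Fin d),
        Φ (v, x) = (-(s⁻¹ * (2 * t))) • v + s⁻¹ • x := fun v => hrw2 v x
    simp_rw [h]
    rw [lintegral_comp_smul_add volume g hg hc2_ne, hfr]
  have ha1_nonneg : 0 ≤ a1 := abs_nonneg _
  have ha2_nonneg : 0 ≤ a2 := abs_nonneg _
  set r : ℝ := (2 : ℝ) ^ (-(d : ℝ) / 2) with hr_def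
  have hr_pos : 0 < r := Real.rpow_pos_of_pos (by norm_num) _
  have hconst : a1 * a2 = r * r := by
    have ha1 : a1 = s ^ d := by
      have h : ((s⁻¹ : ℝ) ^ d)⁻¹ = s ^ d := by rw [← inv_pow, inv_inv]
      rw [ha1_def, h, abs_of_pos (pow_pos hs d)]
    have ha2 : a2 = ((s⁻¹ * (2 * t)) ^ d)⁻¹ := by
      rw [ha2_def, abs_inv, abs_pow, abs_neg, abs_of_pos hc_pos]
    have h1 : a1 * a2 = ((2 : ℝ) ^ d)⁻¹ := by
      have hsc : s / (s⁻¹ * (2 * t)) = 2⁻¹ := by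
        field_simp
        nlinarith [hs2]
      rw [ha1, ha2, ← div_eq_mul_inv, ← div_pow, hsc, inv_pow]
    have h2 : r * r = ((2 : ℝ) ^ d)⁻¹ := by
      rw [hr_def, ← Real.rpow_add (by norm_num)]
      have h : -(d : ℝ) / 2 + -(d : ℝ) / 2 = -(d : ℝ) := by ring
      rw [h, Real.rpow_neg (by norm_num), Real.rpow_natCast]
    rw [h1, h2]
  -- pointwise computation of the integrand's norm
  have hexp : ∀ x : EuclideanSpace ℝ (Fin d),
      ‖Complex.exp (Complex.I * ((‖x‖ : ℂ) ^ 2 / (4 * (t : ℂ))))‖₊ = 1 := by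
    intro x
    have hz : (‖x‖ : ℂ) ^ 2 / (4 * (t : ℂ)) = ((‖x‖ ^ 2 / (4 * t) : ℝ) : ℂ) := by
      push_cast; ring
    have him : ((‖x‖ : ℂ) ^ 2 / (4 * (t : ℂ))).im = 0 := by
      rw [hz]; exact Complex.ofReal_im _
    ext
    rw [coe_nnnorm, Complex.norm_exp]
    simp [Complex.mul_re, him]
  have hpt : ∀ v x : EuclideanSpace ℝ (Fin d),
      (‖u x * (starRingEnd ℂ) (θ ((Real.sqrt t)⁻¹ • (x - (2 * t) • v)) *
        Complex.exp (Complex.I * ((‖x‖ : ℂ) ^ 2 / (4 * (t : ℂ)))))‖₊ : ℝ≥0∞)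
      = U x * g (Φ (v, x)) := by
    intro v x
    rw [nnnorm_mul, RCLike.nnnorm_conj, nnnorm_mul, hexp, mul_one, ENNReal.coe_mul]
  -- bound on the norm of γ
  have h1 : ∀ v : EuclideanSpace ℝ (Fin d),
      (‖γ v‖₊ : ℝ≥0∞) ≤ ∫⁻ x, U x * g (Φ (v, x)) := by
    intro v
    rw [hγ v]
    refine le_trans (enorm_integral_le_lintegral_enorm _) (le_of_eq ?_)
    exact lintegral_congr fun x => hpt v x
  -- Cauchy-Schwarz in x
  have hpq : (2 : ℝ).HolderConjugate 2 := Real.HolderConjugate.two_two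
  have h2 : ∀ v : EuclideanSpace ℝ (Fin d), (‖γ v‖₊ : ℝ≥0∞) ^ (2 : ℝ)
      ≤ (ENNReal.ofReal a1 * L) * ∫⁻ x, U x ^ (2 : ℝ) * g (Φ (v, x)) := by
    intro v
    set f : EuclideanSpace ℝ (Fin d) → ℝ≥0∞ :=
      fun x => g (Φ (v, x)) ^ ((1 : ℝ) / 2) with hf_def
    have hfm : Measurable f := (hKm.comp (measurable_prodMk_left)).pow_const _
    set f2 : EuclideanSpace ℝ (Fin d) → ℝ≥0∞ := fun x => U x * f x with hf2_def
    have hf2m : AEMeasurable f2 volume := hU.mul hfm.aemeasurable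
    have hff : ∀ x : EuclideanSpace ℝ (Fin d), f x * f x = g (Φ (v, x)) := by
      intro x
      rw [hf_def, ← ENNReal.rpow_add_of_nonneg _ _ (by norm_num) (by norm_num)]
      norm_num
    have hkey : ∀ x : EuclideanSpace ℝ (Fin d), U x * g (Φ (v, x)) = (f * f2) x := by
      intro x
      simp only [Pi.mul_apply, hf2_def]
      rw [← mul_assoc, mul_comm (f x) (U x), mul_assoc, hff]
    have hCS := ENNReal.lintegral_mul_le_Lp_mul_Lq volume hpq hfm.aemeasurable hf2m
    have hfp : ∫⁻ x, f x ^ (2 : ℝ) = ENNReal.ofReal a1 * L := by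
      rw [← hA v]
      refine lintegral_congr fun x => ?_
      rw [hf_def, ← ENNReal.rpow_mul]
      norm_num
    have hgp : ∫⁻ x, f2 x ^ (2 : ℝ) = ∫⁻ x, U x ^ (2 : ℝ) * g (Φ (v, x)) := by
      refine lintegral_congr fun x => ?_
      rw [hf2_def, ENNReal.mul_rpow_of_nonneg _ _ (by norm_num)]
      congr 1
      rw [hf_def, ← ENNReal.rpow_mul]
      norm_num
    have hstep : (‖γ v‖₊ : ℝ≥0∞) ≤ (ENNReal.ofReal a1 * L) ^ ((1:ℝ)/2)
        * (∫⁻ x, U x ^ (2 : ℝ) * g (Φ (v, x))) ^ ((1:ℝ)/2) := by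
      refine le_trans (h1 v) ?_
      calc ∫⁻ x, U x * g (Φ (v, x)) = ∫⁻ x, (f * f2) x := lintegral_congr hkey
        _ ≤ (∫⁻ x, f x ^ (2:ℝ)) ^ ((1:ℝ)/2) * (∫⁻ x, f2 x ^ (2:ℝ)) ^ ((1:ℝ)/2) := hCS
        _ = (ENNReal.ofReal a1 * L) ^ ((1:ℝ)/2)
            * (∫⁻ x, U x ^ (2 : ℝ) * g (Φ (v, x))) ^ ((1:ℝ)/2) := by rw [hfp, hgp]
    calc (‖γ v‖₊ : ℝ≥0∞) ^ (2 : ℝ)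
        ≤ ((ENNReal.ofReal a1 * L) ^ ((1:ℝ)/2)
            * (∫⁻ x, U x ^ (2 : ℝ) * g (Φ (v, x))) ^ ((1:ℝ)/2)) ^ (2 : ℝ) :=
          ENNReal.rpow_le_rpow hstep (by norm_num)
      _ = (ENNReal.ofReal a1 * L) * ∫⁻ x, U x ^ (2 : ℝ) * g (Φ (v, x)) := by
          rw [ENNReal.mul_rpow_of_nonneg _ _ (by norm_num : (0:ℝ) ≤ 2),
            ← ENNReal.rpow_mul, ← ENNReal.rpow_mul]
          norm_num
  -- integrate in v, swap, and compute
  have hA_top : ENNReal.ofReal a1 * L ≠ ⊤ := ENNReal.mul_ne_top ENNReal.ofReal_ne_top hL_top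
  have hswap_meas : AEMeasurable
      (fun p : EuclideanSpace ℝ (Fin d) × EuclideanSpace ℝ (Fin d) => U p.2 ^ (2 : ℝ) * g (Φ p))
      ((volume : Measure (EuclideanSpace ℝ (Fin d))).prod volume) := by
    refine AEMeasurable.mul ?_ hKm.aemeasurable
    exact (hU.comp_quasiMeasurePreserving Measure.quasiMeasurePreserving_snd).pow_const _
  have hU2_top : ∀ x : EuclideanSpace ℝ (Fin d), U x ^ (2 : ℝ) ≠ ⊤ := fun x =>
    ENNReal.rpow_ne_top_of_nonneg (by norm_num) ENNReal.coe_ne_top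
  have hmain : ∫⁻ v, (‖γ v‖₊ : ℝ≥0∞) ^ (2 : ℝ)
      ≤ (ENNReal.ofReal a1 * L) * ((ENNReal.ofReal a2 * L) * ∫⁻ x, U x ^ (2 : ℝ)) := by
    calc ∫⁻ v, (‖γ v‖₊ : ℝ≥0∞) ^ (2 : ℝ)
        ≤ ∫⁻ v, (ENNReal.ofReal a1 * L) * ∫⁻ x, U x ^ (2 : ℝ) * g (Φ (v, x)) :=
          lintegral_mono h2
      _ = (ENNReal.ofReal a1 * L) * ∫⁻ v, ∫⁻ x, U x ^ (2 : ℝ) * g (Φ (v, x)) :=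
          lintegral_const_mul' _ _ hA_top
      _ = (ENNReal.ofReal a1 * L) * ∫⁻ x, ∫⁻ v, U x ^ (2 : ℝ) * g (Φ (v, x)) := by
          rw [lintegral_lintegral_swap hswap_meas]
      _ = (ENNReal.ofReal a1 * L) * ∫⁻ x, U x ^ (2 : ℝ) * (ENNReal.ofReal a2 * L) := by
          congr 1
          refine lintegral_congr fun x => ?_
          rw [lintegral_const_mul' _ _ (hU2_top x), hB x]
      _ = (ENNReal.ofReal a1 * L) * ((ENNReal.ofReal a2 * L) * ∫⁻ x, U x ^ (2 : ℝ)) := by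
          rw [lintegral_mul_const' _ _ (ENNReal.mul_ne_top ENNReal.ofReal_ne_top hL_top),
            mul_comm (∫⁻ x, U x ^ (2:ℝ))]
  -- rewrite in terms of eLpNorm
  have hγnorm : eLpNorm γ 2 volume = (∫⁻ v, (‖γ v‖₊ : ℝ≥0∞) ^ (2 : ℝ)) ^ ((1:ℝ)/2) := by
    rw [eLpNorm_eq_lintegral_rpow_enorm_toReal (by norm_num) (by norm_num)]
    norm_num
    rfl
  have hunorm : eLpNorm u 2 volume = (∫⁻ x, U x ^ (2 : ℝ)) ^ ((1:ℝ)/2) := by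
    rw [eLpNorm_eq_lintegral_rpow_enorm_toReal (by norm_num) (by norm_num)]
    norm_num
    rfl
  have hrrL : ENNReal.ofReal a1 * L * (ENNReal.ofReal a2 * L)
      = (ENNReal.ofReal r * L) * (ENNReal.ofReal r * L) := by
    rw [mul_mul_mul_comm, ← ENNReal.ofReal_mul ha1_nonneg, hconst,
      ENNReal.ofReal_mul hr_pos.le, mul_mul_mul_comm]
  have hBnd : eLpNorm γ 2 volume ≤ (ENNReal.ofReal r * L) * eLpNorm u 2 volume := by
    rw [hγnorm, hunorm]
    calc (∫⁻ v, (‖γ v‖₊ : ℝ≥0∞) ^ (2 : ℝ)) ^ ((1:ℝ)/2)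
        ≤ ((ENNReal.ofReal a1 * L) * ((ENNReal.ofReal a2 * L) * ∫⁻ x, U x ^ (2 : ℝ))) ^ ((1:ℝ)/2) :=
          ENNReal.rpow_le_rpow hmain (by norm_num)
      _ = ((ENNReal.ofReal r * L) ^ (2:ℝ) * ∫⁻ x, U x ^ (2 : ℝ)) ^ ((1:ℝ)/2) := by
          rw [← mul_assoc, hrrL, ENNReal.rpow_two, sq]
      _ = (ENNReal.ofReal r * L) * (∫⁻ x, U x ^ (2 : ℝ)) ^ ((1:ℝ)/2) := by
          rw [ENNReal.mul_rpow_of_nonneg _ _ (by norm_num : (0:ℝ) ≤ 1/2),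
            ← ENNReal.rpow_mul]
          norm_num
  have hconst_eq : ENNReal.ofReal ((2 : ℝ) ^ (-(d : ℝ) / 2) * ∫ x, ‖θ x‖)
      = ENNReal.ofReal r * L := by
    rw [ENNReal.ofReal_mul hr_pos.le, hLofReal, hr_def]
  -- measurability of γ
  have hγmeas : AEStronglyMeasurable γ (volume : Measure (EuclideanSpace ℝ (Fin d))) := by
    have haesm : AEStronglyMeasurable
        (fun p : EuclideanSpace ℝ (Fin d) × EuclideanSpace ℝ (Fin d) =>
          u p.2 * (starRingEnd ℂ) (θ ((Real.sqrt t)⁻¹ • (p.2 - (2 * t) • p.1)) *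
            Complex.exp (Complex.I * ((‖p.2‖ : ℂ) ^ 2 / (4 * (t : ℂ))))))
        ((volume : Measure (EuclideanSpace ℝ (Fin d))).prod volume) := by
      refine AEStronglyMeasurable.mul
        (hu.1.comp_quasiMeasurePreserving Measure.quasiMeasurePreserving_snd) ?_
      refine Continuous.aestronglyMeasurable ?_
      refine Complex.continuous_conj.comp ?_
      refine ((θ.continuous.comp hΦc).mul ?_)
      exact Complex.continuous_exp.comp (continuous_const.mul
        (((Complex.continuous_ofReal.comp continuous_snd.norm).pow 2).div_const _))
    have hγeq : γ = fun v => ∫ x, u x *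
        (starRingEnd ℂ) (θ ((Real.sqrt t)⁻¹ • (x - (2 * t) • v)) *
          Complex.exp (Complex.I * ((‖x‖ : ℂ) ^ 2 / (4 * (t : ℂ))))) := funext hγ
    rw [hγeq]
    exact haesm.integral_prod_right'
  have hfinal : eLpNorm γ 2 volume ≤
      ENNReal.ofReal ((2 : ℝ) ^ (-(d : ℝ) / 2) * ∫ x, ‖θ x‖) * eLpNorm u 2 volume := by
    rw [hconst_eq]; exact hBnd
  refine ⟨⟨hγmeas, ?_⟩, hfinal⟩
  refine lt_of_le_of_lt hfinal ?_
  exact ENNReal.mul_lt_top ENNReal.ofReal_lt_top hu.2
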